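/- Let k ≥ 2 be an integer, let p₁, p_k be real numbers with 0 < p₁ < p_k < 1 and p_k < k·p₁, let W, v_k be real numbers and L > 0, and let U : ℝ → ℝ be differentiable with U'(x) > 0 for all x and with U' strictly antitone on ℝ (hence U is strictly increasing and strictly concave). Define H^1(L_c) = p₁·U(W − p₁·L_c − L + L_c) + (1 − p₁)·U(W − p₁·L_c) and H^k(t, L_c) = p₁·U(v_k·W − p_k·L_c − L − (k−1)·t + L_c) + (p_k − p₁)·U(v_k·W − p_k·L_c − L + t + L_c) + (1 − p_k)·U(v_k·W − p_k·L_c), and the objective J(s, t, L_c) = (1 − s)·H^1(L_c) + s·H^k(t, L_c) over the feasible set {(s,t,L_c) : 0 ≤ s ≤ 1, 0 ≤ t ≤ L, L_c ≥ 0}. If W − p₁·L > v_k·W − p_k·L, then (s, t, L_c) = (0, 0, L) is a maximizer of J over the feasible set, with optimal value U(W − p₁·L). -/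

import Mathlib

/-- Scenario B contract design (Theorem 2, first case): if `W − p₁·L > v_k·W − p_k·L`,
then `(s, t, L_c) = (0, 0, L)` maximizes the objective
`J(s,t,L_c) = (1 − s)·H¹(L_c) + s·Hᵏ(t, L_c)` over the feasible set
`{(s,t,L_c) : 0 ≤ s ≤ 1, 0 ≤ t ≤ L, L_c ≥ 0}`, with optimal value `U(W − p₁·L)`. -/
theorem scenarioB_optimal_contract_no_participation
    (k : ℕ) (hk : 2 ≤ k) (p₁ pk W vk L : ℝ) (hL : 0 < L)
    (hp₁ : 0 < p₁) (hp₁k : p₁ < pk) (hpk1 : pk < 1) (hpk : pk < (k : ℝ) * p₁)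
    (U : ℝ → ℝ) (hUdiff : Differentiable ℝ U)
    (hU' : ∀ x : ℝ, 0 < deriv U x) (hU'anti : StrictAnti (deriv U))
    (H1 : ℝ → ℝ)
    (hH1 : ∀ Lc : ℝ, H1 Lc =
      p₁ * U (W - p₁ * Lc - L + Lc) + (1 - p₁) * U (W - p₁ * Lc))
    (Hk : ℝ → ℝ → ℝ)
    (hHk : ∀ t Lc : ℝ, Hk t Lc =
      p₁ * U (vk * W - pk * Lc - L - ((k : ℝ) - 1) * t + Lc) +
      (pk - p₁) * U (vk * W - pk * Lc - L + t + Lc) +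
      (1 - pk) * U (vk * W - pk * Lc))
    (J : ℝ × ℝ × ℝ → ℝ)
    (hJ : ∀ x : ℝ × ℝ × ℝ, J x = (1 - x.1) * H1 x.2.2 + x.1 * Hk x.2.1 x.2.2)
    (F : Set (ℝ × ℝ × ℝ))
    (hF : F = {x : ℝ × ℝ × ℝ |
      0 ≤ x.1 ∧ x.1 ≤ 1 ∧ 0 ≤ x.2.1 ∧ x.2.1 ≤ L ∧ 0 ≤ x.2.2})
    (hcase : W - p₁ * L > vk * W - pk * L) :
    IsMaxOn J F (0, 0, L) ∧ J (0, 0, L) = U (W - p₁ * L) := by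
  have hmono : StrictMono U := strictMono_of_deriv_pos hU'
  have hcc : ConcaveOn ℝ Set.univ U :=
    (hU'anti.strictConcaveOn_univ_of_deriv hUdiff.continuous).concaveOn
  have hpk0 : 0 < pk := lt_trans hp₁ hp₁k
  -- generic two-point Jensen
  have jensen : ∀ a b x y : ℝ, 0 ≤ a → 0 ≤ b → a + b = 1 →
      a * U x + b * U y ≤ U (a * x + b * y) := by
    intro a b x y ha hb hab
    have := hcc.2 (Set.mem_univ x) (Set.mem_univ y) ha hb hab
    simpa [smul_eq_mul] using this
  have key : ∀ x : ℝ × ℝ × ℝ, x ∈ F → J x ≤ U (W - p₁ * L) := by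
    intro x hx
    rw [hF] at hx
    obtain ⟨hs0, hs1, ht0, htL, hLc0⟩ := hx
    set s := x.1 with hs
    set t := x.2.1 with ht
    set Lc := x.2.2 with hLc
    have hH1b : H1 Lc ≤ U (W - p₁ * L) := by
      rw [hH1]
      have h := jensen p₁ (1 - p₁) (W - p₁ * Lc - L + Lc) (W - p₁ * Lc)
        hp₁.le (by linarith) (by ring)
      have heq : p₁ * (W - p₁ * Lc - L + Lc) + (1 - p₁) * (W - p₁ * Lc)
          = W - p₁ * L := by ring
      rwa [heq] at h
    have hHkb : Hk t Lc ≤ U (W - p₁ * L) := by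
      rw [hHk]
      set a := vk * W - pk * Lc - L - ((k : ℝ) - 1) * t + Lc with ha
      set b := vk * W - pk * Lc - L + t + Lc with hb
      set c := vk * W - pk * Lc with hc
      have h1 := jensen (p₁ / pk) ((pk - p₁) / pk) a b
        (by positivity) (by apply div_nonneg <;> linarith)
        (by field_simp; ring)
      set z := p₁ / pk * a + (pk - p₁) / pk * b with hz
      have h1' : p₁ * U a + (pk - p₁) * U b ≤ pk * U z := by
        have := mul_le_mul_of_nonneg_left h1 hpk0.le
        calc p₁ * U a + (pk - p₁) * U b
            = pk * (p₁ / pk * U a + (pk - p₁) / pk * U b) := by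
              field_simp
          _ ≤ pk * U z := this
      have h2 := jensen pk (1 - pk) z c hpk0.le (by linarith) (by ring)
      have hm : pk * z + (1 - pk) * c
          = vk * W - pk * L + t * (pk - (k : ℝ) * p₁) := by
        rw [hz, ha, hb, hc]; field_simp; ring
      have hmle : vk * W - pk * L + t * (pk - (k : ℝ) * p₁) ≤ W - p₁ * L := by
        nlinarith [mul_nonpos_of_nonneg_of_nonpos ht0 (by linarith : pk - (k : ℝ) * p₁ ≤ 0)]
      have h3 : U (pk * z + (1 - pk) * c) ≤ U (W - p₁ * L) := by
        rw [hm]; exact hmono.monotone hmle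
      linarith
    rw [hJ]
    nlinarith [mul_le_mul_of_nonneg_left hH1b (by linarith : (0:ℝ) ≤ 1 - s),
      mul_le_mul_of_nonneg_left hHkb hs0]
  have hval : J (0, 0, L) = U (W - p₁ * L) := by
    rw [hJ, hH1]
    have : W - p₁ * L - L + L = W - p₁ * L := by ring
    simp [this]; ring
  refine ⟨?_, hval⟩
  intro x hx
  simp only [Set.mem_setOf_eq, hval]
  exact key x hx
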